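/- arXiv:2308.02127 — 5 statements merged into one kernel-verified Lean document; each statement's English description precedes it below -/
import Mathlib

section
/- For any cycle C_n of order n ≥ 3, the total outer-connected domination number of its middle graph equals 2n − 3, i.e., γ_tc(M(C_n)) = 2n − 3. -/
open SimpleGraph

/-- The middle graph `M(G)`: vertices are `V(G) ⊕ E(G)`; an edge-vertex is adjacent to
another edge-vertex iff the edges are distinct and share an endpoint, and a vertex is
adjacent to an edge iff it is incident to it. -/
def middleGraph {V : Type*} (G : SimpleGraph V) : SimpleGraph (V ⊕ G.edgeSet) where
  Adj x y :=
    match x, y with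
    | Sum.inl _, Sum.inl _ => False
    | Sum.inl v, Sum.inr e => v ∈ (e : Sym2 V)
    | Sum.inr e, Sum.inl v => v ∈ (e : Sym2 V)
    | Sum.inr e, Sum.inr f => e ≠ f ∧ ∃ v, v ∈ (e : Sym2 V) ∧ v ∈ (f : Sym2 V)
  symm := by
    constructor
    rintro (v|e) (w|f) h
    · exact h
    · exact h
    · exact h
    · exact ⟨h.1.symm, h.2.imp fun v hv => ⟨hv.2, hv.1⟩⟩
  loopless := by
    constructor
    rintro (v|e) h
    · exact h
    · exact h.1 rfl

/-- `D` is a total dominating set of `G`: every vertex has a neighbour in `D`. -/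
def IsTotalDomSet {V : Type*} (G : SimpleGraph V) (D : Set V) : Prop :=
  ∀ v : V, ∃ u ∈ D, G.Adj v u

/-- `D` is a total outer-connected dominating set of `G`: it is total dominating and
the subgraph induced on the complement of `D` is connected. -/
def IsTOCDomSet {V : Type*} (G : SimpleGraph V) (D : Set V) : Prop :=
  IsTotalDomSet G D ∧ (G.induce Dᶜ).Connected

/-- The total domination number `γₜ(G)`. -/
noncomputable def totalDomNum {V : Type*} (G : SimpleGraph V) : ℕ :=
  sInf {k | ∃ D : Set V, IsTotalDomSet G D ∧ D.ncard = k}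

/-- The total outer-connected domination number `γ_tc(G)`. -/
noncomputable def tocDomNum {V : Type*} (G : SimpleGraph V) : ℕ :=
  sInf {k | ∃ D : Set V, IsTOCDomSet G D ∧ D.ncard = k}

/-- The set of leaves (vertices of degree 1) of `G`. -/
def leafSet {V : Type*} (G : SimpleGraph V) : Set V :=
  {v | ∃ u, G.neighborSet v = {u}}

/-- The wheel graph with hub `none` and rim cycle on `Fin n`. -/
def wheelGraph (n : ℕ) : SimpleGraph (Option (Fin n)) where
  Adj x y :=
    match x, y with
    | none, none => False
    | none, some _ => True
    | some _, none => True
    | some i, some j => (SimpleGraph.cycleGraph n).Adj i j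
  symm := by
    constructor
    rintro (_|i) (_|j) h
    · exact h
    · exact h
    · exact h
    · exact (SimpleGraph.cycleGraph n).adj_symm h
  loopless := by
    constructor
    rintro (_|i) h
    · exact h
    · exact (SimpleGraph.cycleGraph n).loopless.irrefl i h

/-- The corona `G ∘ K₁`: to each vertex `a` of `G` (copy `Sum.inl a`) a pendant
vertex `Sum.inr a` is attached. -/
def corona {V : Type*} (G : SimpleGraph V) : SimpleGraph (V ⊕ V) where
  Adj x y :=
    match x, y with
    | Sum.inl a, Sum.inl b => G.Adj a b
    | Sum.inl a, Sum.inr b => a = b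
    | Sum.inr a, Sum.inl b => a = b
    | Sum.inr _, Sum.inr _ => False
  symm := by
    constructor
    rintro (a|a) (b|b) h
    · exact G.adj_symm h
    · exact h.symm
    · exact h.symm
    · exact h
  loopless := by
    constructor
    rintro (a|a) h
    · exact G.loopless.irrefl a h
    · exact h

/-- The 2-corona `G ∘ P₂`: to each vertex `a` of `G` (copy `Sum.inl a`) a path
`Sum.inl a — Sum.inr (Sum.inl a) — Sum.inr (Sum.inr a)` of length 2 is attached. -/
def corona2 {V : Type*} (G : SimpleGraph V) : SimpleGraph (V ⊕ V ⊕ V) where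
  Adj x y :=
    match x, y with
    | Sum.inl a, Sum.inl b => G.Adj a b
    | Sum.inl a, Sum.inr (Sum.inl b) => a = b
    | Sum.inr (Sum.inl a), Sum.inl b => a = b
    | Sum.inr (Sum.inl a), Sum.inr (Sum.inr b) => a = b
    | Sum.inr (Sum.inr a), Sum.inr (Sum.inl b) => a = b
    | _, _ => False
  symm := by
    constructor
    rintro (a|a|a) (b|b|b) h <;> first | exact G.adj_symm h | exact h.symm | exact h
  loopless := by
    constructor
    rintro (a|a|a) h
    · exact G.loopless.irrefl a h
    · exact h
    · exact h

/-- The spider `S_{1,n,n}`: hub `none`, middle vertices `some (.inl i)`,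
leaves `some (.inr i)`; the star `K_{1,n}` with every edge subdivided once. -/
def spiderGraph (n : ℕ) : SimpleGraph (Option (Fin n ⊕ Fin n)) where
  Adj x y :=
    match x, y with
    | none, some (Sum.inl _) => True
    | some (Sum.inl _), none => True
    | some (Sum.inl i), some (Sum.inr j) => i = j
    | some (Sum.inr i), some (Sum.inl j) => i = j
    | _, _ => False
  symm := by
    constructor
    rintro (_|i|i) (_|j|j) h <;> first | exact h.symm | exact h
  loopless := by
    constructor
    rintro (_|i|i) h <;> exact h

/-- The friendship graph `Fₙ`: `n` triangles sharing the common vertex `none`. -/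
def friendshipGraph (n : ℕ) : SimpleGraph (Option (Fin n × Fin 2)) where
  Adj x y :=
    match x, y with
    | none, some _ => True
    | some _, none => True
    | some (i, a), some (j, b) => i = j ∧ a ≠ b
    | none, none => False
  symm := by
    constructor
    rintro (_|⟨i,a⟩) (_|⟨j,b⟩) h <;> first | exact ⟨h.1.symm, h.2.symm⟩ | exact h
  loopless := by
    constructor
    rintro (_|⟨i,a⟩) h
    · exact h
    · exact h.2 rfl

section MyAux

variable {m : ℕ}

lemma two_ne (m : ℕ) : (1 + 1 : Fin (m+3)) ≠ 0 := by
  intro h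
  rw [Fin.ext_iff, Fin.val_add, Fin.val_one, Fin.val_zero] at h
  rw [Nat.mod_eq_of_lt (by omega)] at h
  omega

lemma one_ne (m : ℕ) : (1 : Fin (m+3)) ≠ 0 := by
  intro h
  rw [Fin.ext_iff, Fin.val_one, Fin.val_zero] at h
  omega

lemma fin_zero_ne_one (m : ℕ) : (0 : Fin (m+3)) ≠ 1 := fun h => one_ne m h.symm

lemma succ_ne (v : Fin (m+3)) : v + 1 ≠ v := by
  intro h
  nth_rewrite 2 [← add_zero v] at h
  exact one_ne m (add_left_cancel h)

lemma succ_ne' (v : Fin (m+3)) : v ≠ v + 1 := fun h => succ_ne v h.symm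

lemma add2_ne (v : Fin (m+3)) : v + 1 + 1 ≠ v := by
  intro h
  rw [add_assoc] at h
  nth_rewrite 2 [← add_zero v] at h
  exact two_ne m (add_left_cancel h)

lemma add2_ne' (v : Fin (m+3)) : v ≠ v + 1 + 1 := fun h => add2_ne v h.symm

lemma cyc_adj {u v : Fin (m+3)} : (cycleGraph (m+3)).Adj u v ↔ u = v + 1 ∨ v = u + 1 := by
  rw [cycleGraph_adj']
  have h1 : ((1 : Fin (m+3)) : ℕ) = 1 := rfl
  rw [show ((u-v : Fin (m+3)):ℕ) = 1 ↔ u - v = 1 by rw [Fin.ext_iff, h1]]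
  rw [show ((v-u : Fin (m+3)):ℕ) = 1 ↔ v - u = 1 by rw [Fin.ext_iff, h1]]
  rw [sub_eq_iff_eq_add, sub_eq_iff_eq_add]
  constructor
  · rintro (h|h) <;> [left; right] <;> rw [h] <;> exact add_comm _ _
  · rintro (h|h) <;> [left; right] <;> rw [h] <;> exact add_comm _ _

lemma edge_mem₁ (v : Fin (m+3)) : s(v, v+1) ∈ (cycleGraph (m+3)).edgeSet :=
  (mem_edgeSet _).2 (cyc_adj.2 (Or.inr rfl))

lemma edge_mem₂ (v : Fin (m+3)) : s(v-1, v) ∈ (cycleGraph (m+3)).edgeSet :=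
  (mem_edgeSet _).2 (cyc_adj.2 (Or.inr (by rw [sub_add_cancel])))

lemma edge_ne (v : Fin (m+3)) : s(v, v+1) ≠ s(v-1, v) := by
  intro h
  rw [Sym2.eq_iff] at h
  revert h
  rintro (⟨h1, h2⟩ | ⟨h1, h2⟩)
  · exact succ_ne v h2
  · apply add2_ne v
    rw [h2, sub_add_cancel]

lemma mem_edge {e : Sym2 (Fin (m+3))} (he : e ∈ (cycleGraph (m+3)).edgeSet)
    {v : Fin (m+3)} (hv : v ∈ e) : e = s(v, v+1) ∨ e = s(v-1, v) := by
  induction e with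
  | _ a b =>
    rw [SimpleGraph.mem_edgeSet] at he
    rw [Sym2.mem_iff] at hv
    rcases hv with rfl | rfl
    · rcases cyc_adj.1 he with h | h
      · right
        rw [Sym2.eq_swap, Sym2.congr_left]
        rw [h, add_sub_cancel_right]
      · left; rw [h]
    · rcases cyc_adj.1 he with h | h
      · left
        rw [Sym2.eq_swap, Sym2.congr_right, h]
      · right
        rw [Sym2.congr_left, h, add_sub_cancel_right]

lemma two_edges {e f g : Sym2 (Fin (m+3))} {v : Fin (m+3)}
    (he : e ∈ (cycleGraph (m+3)).edgeSet) (hf : f ∈ (cycleGraph (m+3)).edgeSet)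
    (hg : g ∈ (cycleGraph (m+3)).edgeSet)
    (hve : v ∈ e) (hvf : v ∈ f) (hvg : v ∈ g) (hef : e ≠ f) : g = e ∨ g = f := by
  rcases mem_edge he hve with rfl | rfl <;> rcases mem_edge hf hvf with rfl | rfl <;>
    rcases mem_edge hg hvg with rfl | rfl <;> tauto

lemma edge_repr {e : Sym2 (Fin (m+3))} (he : e ∈ (cycleGraph (m+3)).edgeSet) :
    ∃ w, e = s(w, w+1) := by
  induction e with
  | _ a b =>
    rw [SimpleGraph.mem_edgeSet] at he
    rcases cyc_adj.1 he with h | h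
    · exact ⟨b, by rw [Sym2.eq_swap, Sym2.congr_right, h]⟩
    · exact ⟨a, by rw [Sym2.congr_right, h]⟩

lemma card_edgeSet (m : ℕ) : Nat.card (cycleGraph (m+3)).edgeSet = m+3 := by
  rw [← Nat.card_eq_of_bijective (f := fun i : Fin (m+3) => (⟨s(i, i+1), edge_mem₁ i⟩ :
      (cycleGraph (m+3)).edgeSet)) ?_, Nat.card_eq_fintype_card, Fintype.card_fin]
  constructor
  · intro i j hij
    rw [Subtype.mk.injEq, Sym2.eq_iff] at hij
    rcases hij with ⟨h, _⟩ | ⟨h1, h2⟩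
    · exact h
    · exfalso; apply add2_ne j; rw [← h1, h2]
  · rintro ⟨e, he⟩
    obtain ⟨w, rfl⟩ := edge_repr he
    exact ⟨w, rfl⟩

lemma card_vertices (m : ℕ) :
    Nat.card (Fin (m+3) ⊕ (cycleGraph (m+3)).edgeSet) = 2*(m+3) := by
  rw [Nat.card_sum, card_edgeSet]
  simp
  omega

end MyAux

lemma lower {m : ℕ} (D : Set (Fin (m+3) ⊕ (cycleGraph (m+3)).edgeSet))
    (hD : IsTOCDomSet (middleGraph (cycleGraph (m+3))) D) : 2*(m+3) - 3 ≤ D.ncard := by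
  obtain ⟨hdom, hconn⟩ := hD
  suffices h : Dᶜ.ncard ≤ 3 by
    have hc := Set.ncard_add_ncard_compl D
    rw [card_vertices] at hc
    omega
  set M := middleGraph (cycleGraph (m+3)) with hM
  set S : Set (Fin (m+3) ⊕ (cycleGraph (m+3)).edgeSet) := Dᶜ with hS
  -- every vertex has an incident edge in D
  have hdomv : ∀ v : Fin (m+3), ∃ e : (cycleGraph (m+3)).edgeSet,
      v ∈ (e : Sym2 (Fin (m+3))) ∧ Sum.inr e ∈ D := by
    intro v
    obtain ⟨u, hu, hadj⟩ := hdom (Sum.inl v)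
    cases u with
    | inl w => exact hadj.elim
    | inr e => exact ⟨e, hadj, hu⟩
  -- two edges of S through a common vertex coincide
  have key : ∀ (e f : (cycleGraph (m+3)).edgeSet) (v : Fin (m+3)),
      v ∈ (e : Sym2 (Fin (m+3))) → v ∈ (f : Sym2 (Fin (m+3))) →
      Sum.inr e ∈ S → Sum.inr f ∈ S → e = f := by
    intro e f v hve hvf heS hfS
    by_contra hef
    obtain ⟨g, hvg, hgD⟩ := hdomv v
    have hne : (e : Sym2 (Fin (m+3))) ≠ (f : Sym2 (Fin (m+3))) := by
      intro h; exact hef (Subtype.ext h)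
    rcases two_edges (g := (g : Sym2 (Fin (m+3)))) e.2 f.2 g.2 hve hvf hvg hne with h | h
    · exact heS (Subtype.ext h ▸ hgD)
    · exact hfS (Subtype.ext h ▸ hgD)
  by_cases hE : ∃ e : (cycleGraph (m+3)).edgeSet, Sum.inr e ∈ S
  · obtain ⟨e, heS⟩ := hE
    set P : (Fin (m+3) ⊕ (cycleGraph (m+3)).edgeSet) → Prop :=
      fun x => x = Sum.inr e ∨ ∃ v, x = Sum.inl v ∧ v ∈ (e : Sym2 (Fin (m+3))) with hP
    have step : ∀ (x y : ↑S), (M.induce S).Adj x y → P x.val → P y.val := by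
      rintro ⟨x, hx⟩ ⟨y, hy⟩ hadj hPx
      have hadj' : M.Adj x y := hadj
      rcases hPx with hx1 | ⟨v, hx2, hv⟩
      · subst hx1
        cases y with
        | inl w =>
          right; exact ⟨w, rfl, hadj'⟩
        | inr f =>
          left
          obtain ⟨hef, u, hue, huf⟩ := hadj'
          exact (hef (key e f u hue huf heS hy)).elim
      · subst hx2
        cases y with
        | inl w => exact hadj'.elim
        | inr g =>
          left
          have hvg : v ∈ (g : Sym2 (Fin (m+3))) := hadj'
          show Sum.inr g = Sum.inr e
          exact congrArg Sum.inr (key g e v hvg hv hy heS)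
    have walkP : ∀ (x y : ↑S), (M.induce S).Walk x y → P x.val → P y.val := by
      intro x y w
      induction w with
      | nil => exact id
      | cons h p ih => intro hx; exact ih (step _ _ h hx)
    -- S is contained in a 3 element set
    obtain ⟨e', he'⟩ := e
    induction e' with
    | _ a b =>
      have hsub : S ⊆ {Sum.inr ⟨s(a,b), he'⟩, Sum.inl a, Sum.inl b} := by
        intro x hx
        have hr := hconn.preconnected ⟨Sum.inr ⟨s(a,b), he'⟩, heS⟩ ⟨x, hx⟩
        obtain ⟨w⟩ := hr
        have := walkP _ _ w (Or.inl rfl)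
        rcases this with h | ⟨v, rfl, hv⟩
        · left; exact h
        · rw [Sym2.mem_iff] at hv
          rcases hv with rfl | rfl
          · right; left; rfl
          · right; right; rfl
      calc S.ncard ≤ ({Sum.inr ⟨s(a,b), he'⟩, Sum.inl a, Sum.inl b} :
            Set (Fin (m+3) ⊕ (cycleGraph (m+3)).edgeSet)).ncard :=
            Set.ncard_le_ncard hsub (Set.toFinite _)
        _ ≤ 3 := by
            apply le_trans (Set.ncard_insert_le _ _)
            have := Set.ncard_insert_le (Sum.inl a : Fin (m+3) ⊕ (cycleGraph (m+3)).edgeSet)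
              {Sum.inl b}
            simp [Set.ncard_singleton] at this ⊢
            omega
  · push_neg at hE
    obtain ⟨x₀⟩ := hconn.nonempty
    have hone : ∀ (y : ↑S) (w : (M.induce S).Walk x₀ y), y = x₀ := by
      intro y w
      cases w with
      | nil => rfl
      | @cons _ z _ h p =>
        exfalso
        have hadj' : M.Adj x₀.val z.val := h
        obtain ⟨x₀v, hx₀⟩ := x₀
        obtain ⟨zv, hz⟩ := z
        cases x₀v with
        | inr f => exact hE f hx₀
        | inl v =>
          cases zv with
          | inr g => exact hE g hz
          | inl w => exact hadj'
    have hsub : S ⊆ {x₀.val} := by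
      intro x hx
      obtain ⟨w⟩ := hconn.preconnected x₀ ⟨x, hx⟩
      have := hone _ w
      rw [← this]
      rfl
    calc S.ncard ≤ ({x₀.val} : Set _).ncard := Set.ncard_le_ncard hsub (Set.toFinite _)
      _ ≤ 3 := by rw [Set.ncard_singleton]; omega

section MyUpper

variable {m : ℕ}

def e₀ (m : ℕ) : (cycleGraph (m+3)).edgeSet := ⟨s(0, 1), by
  have := edge_mem₁ (0 : Fin (m+3))
  rwa [zero_add] at this⟩

def S₀ (m : ℕ) : Set (Fin (m+3) ⊕ (cycleGraph (m+3)).edgeSet) :=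
  {Sum.inl 0, Sum.inl 1, Sum.inr (e₀ m)}

lemma ncard_S₀ (m : ℕ) : (S₀ m).ncard = 3 := by
  rw [Set.ncard_eq_three]
  refine ⟨_, _, _, ?_, by simp, by simp, rfl⟩
  simp only [ne_eq, Sum.inl.injEq]
  exact fun h => one_ne m h.symm

lemma upper_dom (m : ℕ) : IsTotalDomSet (middleGraph (cycleGraph (m+3))) (S₀ m)ᶜ := by
  intro x
  cases x with
  | inl v =>
    by_cases h : s(v, v+1) = s((0:Fin (m+3)), 1)
    · refine ⟨Sum.inr ⟨s(v-1, v), edge_mem₂ v⟩, ?_, ?_⟩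
      · simp only [S₀, Set.mem_compl_iff, Set.mem_insert_iff, Set.mem_singleton_iff]
        push_neg
        refine ⟨by simp, by simp, ?_⟩
        intro hc
        rw [Sum.inr.injEq, e₀, Subtype.mk.injEq] at hc
        exact edge_ne v (h.trans hc.symm)
      · show v ∈ s(v-1, v)
        exact Sym2.mem_mk_right _ _
    · refine ⟨Sum.inr ⟨s(v, v+1), edge_mem₁ v⟩, ?_, ?_⟩
      · simp only [S₀, Set.mem_compl_iff, Set.mem_insert_iff, Set.mem_singleton_iff]
        push_neg
        refine ⟨by simp, by simp, ?_⟩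
        intro hc
        rw [Sum.inr.injEq, e₀, Subtype.mk.injEq] at hc
        exact h hc
      · show v ∈ s(v, v+1)
        exact Sym2.mem_mk_left _ _
  | inr e =>
    obtain ⟨e', he⟩ := e
    obtain ⟨w, rfl⟩ := edge_repr he
    -- candidates
    have hg1 : s(w+1, w+1+1) ∈ (cycleGraph (m+3)).edgeSet := edge_mem₁ (w+1)
    have hg2 : s(w-1, w) ∈ (cycleGraph (m+3)).edgeSet := edge_mem₂ w
    have hne1 : s(w, w+1) ≠ s(w+1, w+1+1) := by
      intro hc
      rw [Sym2.eq_iff] at hc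
      rcases hc with ⟨h1, _⟩ | ⟨h1, _⟩
      · exact succ_ne w h1.symm
      · exact add2_ne w h1.symm
    have hne2 : s(w, w+1) ≠ s(w-1, w) := edge_ne w
    have hg12 : s(w+1, w+1+1) ≠ (s(w-1, w) : Sym2 (Fin (m+3))) := by
      intro hc
      rw [Sym2.eq_iff] at hc
      rcases hc with ⟨h1, h2⟩ | ⟨h1, h2⟩
      · exact add2_ne w h2
      · exact succ_ne w h1
    by_cases h : s(w+1, w+1+1) = s((0:Fin (m+3)), 1)
    · refine ⟨Sum.inr ⟨s(w-1, w), hg2⟩, ?_, ?_⟩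
      · simp only [S₀, Set.mem_compl_iff, Set.mem_insert_iff, Set.mem_singleton_iff]
        push_neg
        refine ⟨by simp, by simp, ?_⟩
        intro hc
        rw [Sum.inr.injEq, e₀, Subtype.mk.injEq] at hc
        exact hg12 (h.trans hc.symm)
      · refine ⟨fun hc => hne2 (congrArg Subtype.val hc), w, ?_, ?_⟩
        · exact Sym2.mem_mk_left _ _
        · exact Sym2.mem_mk_right _ _
    · refine ⟨Sum.inr ⟨s(w+1, w+1+1), hg1⟩, ?_, ?_⟩
      · simp only [S₀, Set.mem_compl_iff, Set.mem_insert_iff, Set.mem_singleton_iff]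
        push_neg
        refine ⟨by simp, by simp, ?_⟩
        intro hc
        rw [Sum.inr.injEq, e₀, Subtype.mk.injEq] at hc
        exact h hc
      · refine ⟨fun hc => hne1 (congrArg Subtype.val hc), w+1, ?_, ?_⟩
        · exact Sym2.mem_mk_right _ _
        · exact Sym2.mem_mk_left _ _

lemma upper_conn (m : ℕ) :
    ((middleGraph (cycleGraph (m+3))).induce ((S₀ m)ᶜ)ᶜ).Connected := by
  rw [compl_compl]
  have h0 : (Sum.inl 0 : Fin (m+3) ⊕ (cycleGraph (m+3)).edgeSet) ∈ S₀ m := by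
    simp [S₀]
  have h1 : (Sum.inl 1 : Fin (m+3) ⊕ (cycleGraph (m+3)).edgeSet) ∈ S₀ m := by
    simp [S₀]
  have h2 : (Sum.inr (e₀ m) : Fin (m+3) ⊕ (cycleGraph (m+3)).edgeSet) ∈ S₀ m := by
    simp [S₀]
  haveI : Nonempty ↑(S₀ m) := ⟨⟨Sum.inl 0, h0⟩⟩
  apply Connected.mk
  · rintro ⟨x, hx⟩ ⟨y, hy⟩
    have hub : ∀ (z : Fin (m+3) ⊕ (cycleGraph (m+3)).edgeSet) (hz : z ∈ S₀ m),
        ((middleGraph (cycleGraph (m+3))).induce (S₀ m)).Reachable ⟨z, hz⟩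
          ⟨Sum.inr (e₀ m), h2⟩ := by
      intro z hz
      rcases hz with rfl | rfl | rfl
      · apply Adj.reachable
        show (0 : Fin (m+3)) ∈ (e₀ m : Sym2 (Fin (m+3)))
        exact Sym2.mem_mk_left _ _
      · apply Adj.reachable
        show (1 : Fin (m+3)) ∈ (e₀ m : Sym2 (Fin (m+3)))
        exact Sym2.mem_mk_right _ _
      · exact Reachable.refl _
    exact (hub x hx).trans (hub y hy).symm

lemma upper_ncard (m : ℕ) : ((S₀ m)ᶜ).ncard = 2*(m+3) - 3 := by
  have hc := Set.ncard_add_ncard_compl (S₀ m)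
  rw [card_vertices, ncard_S₀] at hc
  omega

end MyUpper

theorem stmt1 (n : ℕ) (hn : 3 ≤ n) :
    tocDomNum (middleGraph (SimpleGraph.cycleGraph n)) = 2 * n - 3 := by
  obtain ⟨m, rfl⟩ : ∃ m, n = m + 3 := ⟨n - 3, by omega⟩
  have hwit : 2 * (m + 3) - 3 ∈ {k | ∃ D : Set (Fin (m+3) ⊕ (cycleGraph (m+3)).edgeSet),
      IsTOCDomSet (middleGraph (cycleGraph (m+3))) D ∧ D.ncard = k} :=
    ⟨(S₀ m)ᶜ, ⟨upper_dom m, upper_conn m⟩, upper_ncard m⟩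
  apply le_antisymm
  · exact Nat.sInf_le hwit
  · apply le_csInf ⟨_, hwit⟩
    rintro k ⟨D, hD, rfl⟩
    exact lower D hD
end

section
/- Let T be a tree of order n ≥ 4 that is not isomorphic to the star K_{1,n−1}. Then γ_tc(M(T)) ≤ 2n − 4. -/
open SimpleGraph

lemma aux_closed {V : Type*} (T : SimpleGraph V) (S : Set V)
    (hcl : ∀ y ∈ S, ∀ z, T.Adj y z → z ∈ S) :
    ∀ {y x : V}, y ∈ S → T.Walk y x → x ∈ S := by
  intro y x hy p
  induction p with
  | nil => exact hy
  | cons h p ih => exact ih (hcl _ hy _ h)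

lemma aux_internal_edge {V : Type*} [Fintype V] (T : SimpleGraph V) (hT : T.IsTree)
    (hn : 4 ≤ Fintype.card V)
    (hstar : IsEmpty (T ≃g completeBipartiteGraph (Fin 1) (Fin (Fintype.card V - 1)))) :
    ∃ v w, T.Adj v w ∧ (∃ t, T.Adj v t ∧ t ≠ w) ∧ (∃ t, T.Adj w t ∧ t ≠ v) := by
  classical
  by_contra hcon
  push_neg at hcon
  -- find a vertex of degree ≥ 2
  have hdeg : ∃ c, 2 ≤ T.degree c := by
    by_contra h
    push_neg at h
    have hsum := T.sum_degrees_eq_twice_card_edges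
    have hE : T.edgeFinset.card + 1 = Fintype.card V := hT.card_edgeFinset
    have hle : ∑ v, T.degree v ≤ Fintype.card V := by
      calc ∑ v, T.degree v ≤ ∑ _v : V, 1 := Finset.sum_le_sum (fun i _ => by
              have := h i; omega)
        _ = Fintype.card V := by simp
    omega
  obtain ⟨c, hc⟩ := hdeg
  rw [SimpleGraph.degree] at hc
  have h2 : 1 < (T.neighborFinset c).card := hc
  rw [Finset.one_lt_card] at h2
  obtain ⟨t₁, ht₁, t₂, ht₂, hne⟩ := h2
  rw [SimpleGraph.mem_neighborFinset] at ht₁ ht₂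
  -- every neighbor of c has c as unique neighbor
  have huniq : ∀ u, T.Adj c u → ∀ z, T.Adj u z → z = c := by
    intro u hu z hz
    have hex : ∃ t, T.Adj c t ∧ t ≠ u := by
      by_cases h : t₁ = u
      · exact ⟨t₂, ht₂, by rw [← h]; exact hne.symm⟩
      · exact ⟨t₁, ht₁, h⟩
    exact hcon c u hu hex z hz
  -- the closed set
  set S : Set V := {x | x = c ∨ T.Adj c x} with hS
  have hcl : ∀ y ∈ S, ∀ z, T.Adj y z → z ∈ S := by
    rintro y (rfl | hy) z hz
    · exact Or.inr hz
    · exact Or.inl (huniq y hy z hz)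
  have hall : ∀ x, x ∈ S := by
    intro x
    obtain ⟨p⟩ := hT.isConnected.preconnected c x
    exact aux_closed T S hcl (Or.inl rfl) p
  have hAdj : ∀ a b, T.Adj a b ↔ ((a = c ∧ b ≠ c) ∨ (a ≠ c ∧ b = c)) := by
    intro a b
    constructor
    · intro h
      by_cases ha : a = c
      · subst ha; exact Or.inl ⟨rfl, h.ne'⟩
      · refine Or.inr ⟨ha, ?_⟩
        rcases hall a with rfl | hca
        · exact absurd rfl ha
        · exact huniq a hca b h
    · rintro (⟨rfl, hb⟩ | ⟨ha, rfl⟩)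
      · rcases hall b with rfl | hcb
        · exact absurd rfl hb
        · exact hcb
      · rcases hall a with rfl | hca
        · exact absurd rfl ha
        · exact hca.symm
  -- build the star isomorphism
  have hc1 : Fintype.card {x : V // x = c} = 1 := Fintype.card_subtype_eq c
  have hc2 : Fintype.card {x : V // ¬ x = c} = Fintype.card V - 1 := by
    rw [Fintype.card_subtype_compl, Fintype.card_subtype_eq]
  let e1 : {x : V // x = c} ≃ Fin 1 := Fintype.equivFinOfCardEq hc1
  let e2 : {x : V // ¬ x = c} ≃ Fin (Fintype.card V - 1) := Fintype.equivFinOfCardEq hc2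
  let φ : V ≃ (Fin 1 ⊕ Fin (Fintype.card V - 1)) :=
    (Equiv.sumCompl (· = c)).symm.trans (Equiv.sumCongr e1 e2)
  have hleft : ∀ a, (φ a).isLeft = true ↔ a = c := by
    intro a
    by_cases h : a = c
    · simp [φ, Equiv.sumCompl_symm_apply_of_pos h, h]
    · simp [φ, Equiv.sumCompl_symm_apply_of_neg h, h]
  have hright : ∀ a, (φ a).isRight = true ↔ ¬ a = c := by
    intro a
    rw [← hleft a]
    cases φ a <;> simp
  exact hstar.false ⟨φ, by
    intro a b
    simp only [completeBipartiteGraph_adj, hleft, hright, hAdj, ne_eq]⟩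

theorem stmt7 {V : Type*} [Fintype V] (T : SimpleGraph V) (hT : T.IsTree)
    (hn : 4 ≤ Fintype.card V)
    (hstar : IsEmpty (T ≃g completeBipartiteGraph (Fin 1) (Fin (Fintype.card V - 1)))) :
    tocDomNum (middleGraph T) ≤ 2 * Fintype.card V - 4 := by
  classical
  obtain ⟨v, w, hvw, ⟨tv, htv, htvw⟩, ⟨tw, htw, htwv⟩⟩ := aux_internal_edge T hT hn hstar
  have hvw' : v ≠ w := hvw.ne
  let E : T.edgeSet := ⟨s(v,w), hvw⟩
  let Ev : T.edgeSet := ⟨s(v,tv), htv⟩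
  let Ew : T.edgeSet := ⟨s(w,tw), htw⟩
  have hEv : Ev ≠ E := by
    intro h
    have h' : s(v,tv) = s(v,w) := congrArg Subtype.val h
    rw [Sym2.eq_iff] at h'
    rcases h' with ⟨_, h2⟩ | ⟨h1, _⟩
    · exact htvw h2
    · exact hvw' h1
  have hEw : Ew ≠ E := by
    intro h
    have h' : s(w,tw) = s(v,w) := congrArg Subtype.val h
    rw [Sym2.eq_iff] at h'
    rcases h' with ⟨h1, _⟩ | ⟨_, h2⟩
    · exact hvw' h1.symm
    · exact htwv h2
  set S : Set (V ⊕ T.edgeSet) := {Sum.inl v, Sum.inl w, Sum.inr E} with hSdef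
  -- cardinalities
  have hcardE : Fintype.card ↥T.edgeSet = Fintype.card V - 1 := by
    have h1 : T.edgeFinset.card + 1 = Fintype.card V := hT.card_edgeFinset
    have h2 : T.edgeFinset.card = Fintype.card ↥T.edgeSet := T.edgeFinset_card
    omega
  have h3 : S.ncard = 3 := by
    rw [hSdef, Set.ncard_insert_of_notMem (by simp [hvw']),
      Set.ncard_insert_of_notMem (by simp), Set.ncard_singleton]
  have hcompl : Sᶜ.ncard = 2 * Fintype.card V - 4 := by
    have h4 := Set.ncard_add_ncard_compl S
    have h5 : Nat.card (V ⊕ ↥T.edgeSet) = Fintype.card V + (Fintype.card V - 1) := by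
      rw [Nat.card_eq_fintype_card, Fintype.card_sum, hcardE]
    omega
  -- total domination
  have htotal : IsTotalDomSet (middleGraph T) Sᶜ := by
    rintro (u | ⟨g, hg⟩)
    · by_cases hu : u = v
      · subst hu
        refine ⟨Sum.inr Ev, by simp [hSdef, hEv], ?_⟩
        exact Sym2.mem_iff.mpr (Or.inl rfl)
      · by_cases hu' : u = w
        · subst hu'
          refine ⟨Sum.inr Ew, by simp [hSdef, hEw], ?_⟩
          exact Sym2.mem_iff.mpr (Or.inl rfl)
        · have hex : ∃ t, T.Adj u t := by
            obtain ⟨y, hy⟩ := Fintype.exists_ne_of_one_lt_card (by omega) u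
            obtain ⟨p⟩ := hT.isConnected.preconnected u y
            cases p with
            | nil => exact absurd rfl hy
            | cons h _ => exact ⟨_, h⟩
          obtain ⟨t, ht⟩ := hex
          refine ⟨Sum.inr ⟨s(u,t), ht⟩, ?_, Sym2.mem_iff.mpr (Or.inl rfl)⟩
          simp only [hSdef, Set.mem_compl_iff, Set.mem_insert_iff, Set.mem_singleton_iff,
            not_or]
          refine ⟨by simp, by simp, ?_⟩
          intro h
          rw [Sum.inr.injEq] at h
          have h : s(u,t) = s(v,w) := congrArg Subtype.val h
          rw [Sym2.eq_iff] at h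
          rcases h with ⟨h1, _⟩ | ⟨h1, _⟩
          · exact hu h1
          · exact hu' h1
    · induction g using Sym2.ind with
      | _ a b =>
        have hab : T.Adj a b := hg
        by_cases ha : a ≠ v ∧ a ≠ w
        · exact ⟨Sum.inl a, by simp [hSdef, ha.1, ha.2], Sym2.mem_iff.mpr (Or.inl rfl)⟩
        · by_cases hb : b ≠ v ∧ b ≠ w
          · exact ⟨Sum.inl b, by simp [hSdef, hb.1, hb.2], Sym2.mem_iff.mpr (Or.inr rfl)⟩
          · have ha' : a = v ∨ a = w := by tauto
            have hb' : b = v ∨ b = w := by tauto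
            have hgE : s(a,b) = s(v,w) := by
              rcases ha' with rfl | rfl <;> rcases hb' with rfl | rfl
              · exact absurd rfl hab.ne
              · rfl
              · exact Sym2.eq_swap
              · exact absurd rfl hab.ne
            refine ⟨Sum.inr Ev, by simp [hSdef, hEv], ?_, v, ?_, ?_⟩
            · intro h
              have h : s(a,b) = s(v,tv) := congrArg Subtype.val h
              rw [hgE] at h
              exact hEv (Subtype.ext h.symm)
            · show v ∈ s(a,b); rw [hgE]; exact Sym2.mem_iff.mpr (Or.inl rfl)
            · exact Sym2.mem_iff.mpr (Or.inl rfl)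
  -- connectivity of the complement of the complement
  have hEmem : Sum.inr E ∈ Sᶜᶜ := by simp [hSdef]
  have hconn : ((middleGraph T).induce Sᶜᶜ).Connected := by
    have key : ∀ z (hz : z ∈ Sᶜᶜ),
        ((middleGraph T).induce Sᶜᶜ).Reachable ⟨z, hz⟩ ⟨Sum.inr E, hEmem⟩ := by
      intro z hz
      have hz' : z ∈ S := by simpa using hz
      rcases hz' with rfl | rfl | rfl
      · exact SimpleGraph.Adj.reachable
          (show (middleGraph T).Adj (Sum.inl v) (Sum.inr E) from Sym2.mem_iff.mpr (Or.inl rfl))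
      · exact SimpleGraph.Adj.reachable
          (show (middleGraph T).Adj (Sum.inl w) (Sum.inr E) from Sym2.mem_iff.mpr (Or.inr rfl))
      · exact SimpleGraph.Reachable.refl _
    haveI : Nonempty ↥(Sᶜᶜ) := ⟨⟨Sum.inr E, hEmem⟩⟩
    exact SimpleGraph.Connected.mk (fun x y => (key x.1 x.2).trans (key y.1 y.2).symm)
  have hmem : 2 * Fintype.card V - 4 ∈
      {k | ∃ D : Set (V ⊕ ↥T.edgeSet), IsTOCDomSet (middleGraph T) D ∧ D.ncard = k} :=
    ⟨Sᶜ, ⟨htotal, hconn⟩, hcompl⟩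
  exact Nat.sInf_le hmem
end

section
/- For any tree T of order n ≥ 4, γ_tc(M(T)) ≠ 2n − 3. -/
open SimpleGraph

theorem stmt9 {V : Type*} [Fintype V] (T : SimpleGraph V) (hT : T.IsTree)
    (hn : 4 ≤ Fintype.card V) :
    tocDomNum (middleGraph T) ≠ 2 * Fintype.card V - 3 := by
  classical
  intro h
  set M := middleGraph T with hM
  set n := Fintype.card V with hndef
  have hedge : Fintype.card T.edgeSet + 1 = n := by
    have h1 := hT.card_edgeFinset
    rwa [SimpleGraph.edgeFinset_card] at h1
  have hW : Nat.card (V ⊕ T.edgeSet) = 2 * n - 1 := by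
    rw [Nat.card_eq_fintype_card, Fintype.card_sum]
    omega
  -- every vertex has an incident edge
  have hnbr : ∀ v : V, ∃ g ∈ T.edgeSet, v ∈ g := by
    intro v
    obtain ⟨w, hw⟩ := Fintype.exists_ne_of_one_lt_card (by omega) v
    obtain ⟨p⟩ := hT.isConnected v w
    cases p with
    | nil => exact absurd rfl hw
    | cons ha _ => exact ⟨_, T.mem_edgeSet.2 ha, Sym2.mem_mk_left _ _⟩
  -- the defining set is nonempty and the infimum is attained
  have hSne : {k | ∃ D : Set (V ⊕ T.edgeSet), IsTOCDomSet M D ∧ D.ncard = k}.Nonempty := by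
    by_contra hc
    rw [Set.not_nonempty_iff_eq_empty] at hc
    have : tocDomNum M = 0 := by
      rw [tocDomNum, hc, Nat.sInf_empty]
    omega
  have hmem : (2 * n - 3) ∈
      {k | ∃ D : Set (V ⊕ T.edgeSet), IsTOCDomSet M D ∧ D.ncard = k} := by
    rw [← h]
    exact Nat.sInf_mem hSne
  obtain ⟨D, hD, hDcard⟩ := hmem
  by_cases hint : ∃ e ∈ T.edgeSet, ∀ v ∈ e, ∃ f ∈ T.edgeSet, f ≠ e ∧ v ∈ f
  · -- Case A: there is an internal edge; build a TOC set of size 2n-4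
    obtain ⟨e, he, hP⟩ := hint
    revert he hP
    induction e using Sym2.ind with
    | _ u w =>
    intro he hP
    have huw : T.Adj u w := T.mem_edgeSet.1 he
    obtain ⟨fu, hfu, hfune, hufu⟩ := hP u (Sym2.mem_mk_left u w)
    obtain ⟨fw, hfw, hfwne, hwfw⟩ := hP w (Sym2.mem_mk_right u w)
    set E : V ⊕ T.edgeSet := Sum.inr ⟨s(u, w), he⟩ with hE
    set X : Set (V ⊕ T.edgeSet) := {Sum.inl u, Sum.inl w, E} with hX
    have hXcard : X.ncard = 3 := by
      rw [hX, Set.ncard_insert_of_notMem (by simp [hE, huw.ne]),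
        Set.ncard_insert_of_notMem (by simp [hE]), Set.ncard_singleton]
    have hXc : Xᶜ.ncard = 2 * n - 4 := by
      have h2 := Set.ncard_add_ncard_compl X
      rw [hW, hXcard] at h2
      omega
    have hTOC : IsTOCDomSet M Xᶜ := by
      constructor
      · -- total domination
        rintro (v | ⟨f, hf⟩)
        · by_cases hvu : v = u
          · subst hvu
            refine ⟨Sum.inr ⟨fu, hfu⟩, ?_, ?_⟩
            · simp [hX, hE, Subtype.ext_iff, hfune]
            · exact hufu
          · by_cases hvw : v = w
            · subst hvw
              refine ⟨Sum.inr ⟨fw, hfw⟩, ?_, ?_⟩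
              · simp [hX, hE, Subtype.ext_iff, hfwne]
              · exact hwfw
            · obtain ⟨g, hg, hvg⟩ := hnbr v
              have hgne : g ≠ s(u, w) := by
                intro hgeq
                rw [hgeq, Sym2.mem_iff] at hvg
                tauto
              refine ⟨Sum.inr ⟨g, hg⟩, ?_, ?_⟩
              · simp [hX, hE, Subtype.ext_iff, hgne]
              · exact hvg
        · revert hf
          induction f using Sym2.ind with
          | _ a b =>
          intro hf
          have hab : T.Adj a b := T.mem_edgeSet.1 hf
          by_cases hfe : s(a, b) = s(u, w)
          · refine ⟨Sum.inr ⟨fu, hfu⟩, ?_, ?_⟩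
            · simp [hX, hE, Subtype.ext_iff, hfune]
            · refine ⟨?_, u, ?_, hufu⟩
              · simp only [ne_eq, Subtype.mk.injEq]
                intro hcon
                exact hfune (hcon ▸ hfe)
              · rcases Sym2.eq_iff.1 hfe with ⟨rfl, rfl⟩ | ⟨rfl, rfl⟩
                · exact Sym2.mem_mk_left _ _
                · exact Sym2.mem_mk_right _ _
          · have key : (a ≠ u ∧ a ≠ w) ∨ (b ≠ u ∧ b ≠ w) := by
              by_contra hc
              push_neg at hc
              obtain ⟨h1, h2⟩ := hc
              apply hfe
              rw [Sym2.eq_iff]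
              by_cases hau : a = u
              · subst hau
                have hbw : b = w := h2 (fun hbu => hab.ne' hbu)
                exact Or.inl ⟨rfl, hbw⟩
              · have haw : a = w := h1 hau
                subst haw
                have hbu : b = u := by
                  by_contra hbu
                  exact hab.ne' (h2 hbu)
                exact Or.inr ⟨rfl, hbu⟩
            rcases key with ⟨h1, h2⟩ | ⟨h1, h2⟩
            · refine ⟨Sum.inl a, ?_, ?_⟩
              · simp [hX, hE, h1, h2]
              · exact Sym2.mem_mk_left a b
            · refine ⟨Sum.inl b, ?_, ?_⟩
              · simp [hX, hE, h1, h2]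
              · exact Sym2.mem_mk_right a b
      · -- outer-connectedness
        rw [compl_compl]
        have hmemu : Sum.inl u ∈ X := by simp [hX]
        have hmemw : Sum.inl w ∈ X := by simp [hX]
        have hmemE : E ∈ X := by simp [hX]
        have hadj_u : (M.induce X).Adj ⟨Sum.inl u, hmemu⟩ ⟨E, hmemE⟩ :=
          Sym2.mem_mk_left u w
        have hadj_w : (M.induce X).Adj ⟨Sum.inl w, hmemw⟩ ⟨E, hmemE⟩ :=
          Sym2.mem_mk_right u w
        have hreach : ∀ z : X, (M.induce X).Reachable z ⟨E, hmemE⟩ := by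
          rintro ⟨z, hz⟩
          rw [hX] at hz
          rcases hz with rfl | rfl | rfl
          · exact hadj_u.reachable
          · exact hadj_w.reachable
          · exact SimpleGraph.Reachable.refl _
        have hne : Nonempty ↥X := ⟨⟨E, hmemE⟩⟩
        exact SimpleGraph.Connected.mk fun x y => (hreach x).trans (hreach y).symm
    have hle : tocDomNum M ≤ 2 * n - 4 := Nat.sInf_le ⟨Xᶜ, hTOC, hXc⟩
    omega
  · -- Case B: every edge has a leaf endpoint
    push_neg at hint
    have hedges : ∀ f : T.edgeSet, (Sum.inr f : V ⊕ T.edgeSet) ∈ D := by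
      rintro ⟨f, hf⟩
      obtain ⟨v, hvf, hvonly⟩ := hint f hf
      obtain ⟨y, hyD, hadj⟩ := hD.1 (Sum.inl v)
      rcases y with v' | g
      · exact absurd hadj (by exact id)
      · have hgf : (g : Sym2 V) = f := by
          by_contra hne
          exact (hvonly g g.2 hne) hadj
        have : g = ⟨f, hf⟩ := Subtype.ext hgf
        rwa [this] at hyD
    have hDc : Dᶜ.ncard = 2 := by
      have h2 := Set.ncard_add_ncard_compl D
      rw [hW, hDcard] at h2
      omega
    obtain ⟨a, b, hab, habs⟩ := Set.ncard_eq_two.1 hDc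
    have ha : a ∈ Dᶜ := habs ▸ Set.mem_insert a {b}
    have hb : b ∈ Dᶜ := habs ▸ Set.mem_insert_of_mem a rfl
    have hinl : ∀ x ∈ Dᶜ, ∃ v : V, x = Sum.inl v := by
      rintro (v | f) hx
      · exact ⟨v, rfl⟩
      · exact absurd (hedges f) hx
    have hbot : M.induce Dᶜ = (⊥ : SimpleGraph ↥Dᶜ) := by
      ext ⟨x, hx⟩ ⟨y, hy⟩
      simp only [SimpleGraph.bot_adj, iff_false]
      obtain ⟨vx, rfl⟩ := hinl x hx
      obtain ⟨vy, rfl⟩ := hinl y hy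
      exact fun hadj => hadj
    have hconn := hD.2
    rw [hbot] at hconn
    have := hconn.preconnected ⟨a, ha⟩ ⟨b, hb⟩
    rw [SimpleGraph.reachable_bot] at this
    exact hab (congrArg Subtype.val this)
end

section
/- Let T be a tree of order n ≥ 6 with diameter 4 whose longest path is v1 v2 v3 v4 v5 and such that deg_T(v3) = n − 3 (all remaining n−5 vertices are leaves attached to v3). Then γ_tc(M(T)) = 2n − 6. -/
open SimpleGraph

section Aux
variable {V : Type*} {G : SimpleGraph V}

lemma noC3 (h : G.IsAcyclic) {a b c : V} (hab : G.Adj a b) (hbc : G.Adj b c)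
    (hac : G.Adj a c) : False := by
  have hP1 : (Walk.cons hac Walk.nil).IsPath := by
    simp [Walk.isPath_def, hac.ne]
  have hP2 : (Walk.cons hab (Walk.cons hbc Walk.nil)).IsPath := by
    simp [Walk.isPath_def, hab.ne, hbc.ne, hac.ne]
  have := congrArg (Subtype.val) (h.path_unique ⟨_, hP1⟩ ⟨_, hP2⟩)
  have := congrArg Walk.length this
  simp [Walk.length_cons] at this

lemma noC4 (h : G.IsAcyclic) {a b c d : V} (hab : G.Adj a b) (hbc : G.Adj b c)
    (hcd : G.Adj c d) (had : G.Adj a d) (hac : a ≠ c) (hbd : b ≠ d) : False := by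
  have hP1 : (Walk.cons had Walk.nil).IsPath := by
    simp [Walk.isPath_def, had.ne]
  have hP2 : (Walk.cons hab (Walk.cons hbc (Walk.cons hcd Walk.nil))).IsPath := by
    simp [Walk.isPath_def, hab.ne, hbc.ne, hcd.ne, hac, hbd, had.ne]
  have := congrArg (Subtype.val) (h.path_unique ⟨_, hP1⟩ ⟨_, hP2⟩)
  have := congrArg Walk.length this
  simp [Walk.length_cons] at this

lemma noC5 (h : G.IsAcyclic) {a b c d e : V} (hab : G.Adj a b) (hbc : G.Adj b c)
    (hcd : G.Adj c d) (hde : G.Adj d e) (hae : G.Adj a e) (hac : a ≠ c) (had : a ≠ d)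
    (hbd : b ≠ d) (hbe : b ≠ e) (hce : c ≠ e) : False := by
  have hP1 : (Walk.cons hae Walk.nil).IsPath := by
    simp [Walk.isPath_def, hae.ne]
  have hP2 : (Walk.cons hab (Walk.cons hbc (Walk.cons hcd (Walk.cons hde Walk.nil)))).IsPath := by
    simp [Walk.isPath_def, hab.ne, hbc.ne, hcd.ne, hde.ne, hac, had, hbd, hbe, hce, hae.ne]
  have := congrArg (Subtype.val) (h.path_unique ⟨_, hP1⟩ ⟨_, hP2⟩)
  have := congrArg Walk.length this
  simp [Walk.length_cons] at this

lemma isolated_connected {W : Type*} {H : SimpleGraph W} {S : Set W}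
    (hc : (H.induce S).Connected) {x : W} (hx : x ∈ S)
    (hiso : ∀ y ∈ S, ¬H.Adj x y) : S = {x} := by
  ext y
  simp only [Set.mem_singleton_iff]
  constructor
  · intro hy
    obtain ⟨w⟩ := hc.preconnected ⟨x, hx⟩ ⟨y, hy⟩
    cases w with
    | nil => rfl
    | @cons _ b _ h p =>
      have hadj : H.Adj x b.1 := h
      exact absurd hadj (hiso b.1 b.2)
  · rintro rfl; exact hx

lemma pendant_edge_unique (T : SimpleGraph V) : ∀ z y : V, (∀ w, T.Adj z w → w = y) →
    ∀ e ∈ T.edgeSet, z ∈ e → e = s(z, y) := by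
  intro z y hz e he hze
  induction e with
  | _ x w =>
    rw [mem_edgeSet] at he
    rw [Sym2.mem_iff] at hze
    rcases hze with rfl | rfl
    · rw [hz w he]
    · rw [hz x he.symm]; exact Sym2.eq_swap

end Aux

theorem stmt13 {V : Type*} [Fintype V] (T : SimpleGraph V) (hT : T.IsTree)
    (hn : 6 ≤ Fintype.card V) (hdiam : T.diam = 4) (v : Fin 5 → V)
    (hinj : Function.Injective v)
    (hpath : ∀ i : Fin 4, T.Adj (v i.castSucc) (v i.succ))
    (hdeg : (T.neighborSet (v 2)).ncard = Fintype.card V - 3) :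
    tocDomNum (middleGraph T) = 2 * Fintype.card V - 6 := by
  classical
  have hac := hT.2
  have hne : ∀ i j : Fin 5, i ≠ j → v i ≠ v j := fun i j hij h => hij (hinj h)
  have h01 : T.Adj (v 0) (v 1) := hpath 0
  have h12 : T.Adj (v 1) (v 2) := hpath 1
  have h23 : T.Adj (v 2) (v 3) := hpath 2
  have h34 : T.Adj (v 3) (v 4) := hpath 3
  have hN02 : ¬ T.Adj (v 0) (v 2) := fun h => noC3 hac h01 h12 h
  have hN24 : ¬ T.Adj (v 2) (v 4) := fun h => noC3 hac h23 h34 h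
  have hN03 : ¬ T.Adj (v 0) (v 3) := fun h => noC4 hac h01 h12 h23 h
    (hne 0 2 (by decide)) (hne 1 3 (by decide))
  have hN14 : ¬ T.Adj (v 1) (v 4) := fun h => noC4 hac h12 h23 h34 h
    (hne 1 3 (by decide)) (hne 2 4 (by decide))
  have hN04 : ¬ T.Adj (v 0) (v 4) := fun h => noC5 hac h01 h12 h23 h34 h
    (hne 0 2 (by decide)) (hne 0 3 (by decide)) (hne 1 3 (by decide))
    (hne 1 4 (by decide)) (hne 2 4 (by decide))
  -- neighborhood of the hub
  have hNc_sub : T.neighborSet (v 2) ⊆ Set.univ \ {v 0, v 2, v 4} := by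
    intro w hw
    rw [mem_neighborSet] at hw
    refine ⟨trivial, ?_⟩
    simp only [Set.mem_insert_iff, Set.mem_singleton_iff, not_or]
    refine ⟨fun h => hN02 (h ▸ hw.symm), fun h => T.loopless.irrefl _ (h ▸ hw), fun h => hN24 (h ▸ hw)⟩
  have hcard3 : (Set.univ \ {v 0, v 2, v 4} : Set V).ncard = Fintype.card V - 3 := by
    rw [Set.ncard_diff (Set.subset_univ _), Set.ncard_univ, Nat.card_eq_fintype_card]
    congr 1
    rw [Set.ncard_insert_of_notMem (by simp [hne 0 2 (by decide), hne 0 4 (by decide)]),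
      Set.ncard_insert_of_notMem (by simp [hne 2 4 (by decide)]), Set.ncard_singleton]
  have hNc : T.neighborSet (v 2) = Set.univ \ {v 0, v 2, v 4} :=
    Set.eq_of_subset_of_ncard_le hNc_sub (by rw [hdeg, hcard3]) (Set.toFinite _)
  have hAdjc : ∀ w, w ≠ v 0 → w ≠ v 2 → w ≠ v 4 → T.Adj (v 2) w := by
    intro w h0 h2 h4
    have : w ∈ T.neighborSet (v 2) := by
      rw [hNc]; exact ⟨trivial, by simp [h0, h2, h4]⟩
    rwa [mem_neighborSet] at this
  have hNcmem : ∀ w, T.Adj (v 2) w → w ≠ v 0 ∧ w ≠ v 2 ∧ w ≠ v 4 := by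
    intro w hw
    have := hNc_sub (by rwa [mem_neighborSet])
    simp only [Set.mem_diff, Set.mem_insert_iff, Set.mem_singleton_iff, not_or] at this
    exact this.2
  -- pendant vertices
  have hNa0 : ∀ w, T.Adj (v 0) w → w = v 1 := by
    intro w hw
    by_contra hne1
    have hw0 : w ≠ v 0 := hw.ne'
    by_cases hw2 : w = v 2
    · exact hN02 (hw2 ▸ hw)
    by_cases hw4 : w = v 4
    · exact hN04 (hw4 ▸ hw)
    exact noC4 hac h01 h12 (hAdjc w hw0 hw2 hw4) hw (hne 0 2 (by decide))
      (fun h => hne1 h.symm)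
  have hNa4 : ∀ w, T.Adj (v 4) w → w = v 3 := by
    intro w hw
    by_contra hne3
    have hw4 : w ≠ v 4 := hw.ne'
    by_cases hw2 : w = v 2
    · exact hN24 (hw2 ▸ hw.symm)
    by_cases hw0 : w = v 0
    · exact hN04 (hw0 ▸ hw.symm)
    exact noC4 hac h34.symm h23.symm (hAdjc w hw0 hw2 hw4) hw (hne 4 2 (by decide))
      (fun h => hne3 h.symm)
  have hNleaf : ∀ u, u ≠ v 0 → u ≠ v 1 → u ≠ v 2 → u ≠ v 3 → u ≠ v 4 →
      ∀ w, T.Adj u w → w = v 2 := by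
    intro u hu0 hu1 hu2 hu3 hu4 w hw
    by_contra hw2
    by_cases hw0 : w = v 0
    · exact hu1 (hNa0 u (hw0 ▸ hw.symm))
    by_cases hw4 : w = v 4
    · exact hu3 (hNa4 u (hw4 ▸ hw.symm))
    exact noC3 hac (hAdjc u hu0 hu2 hu4).symm (hAdjc w hw0 hw2 hw4) hw
  have hNa1 : ∀ w, T.Adj (v 1) w → w = v 0 ∨ w = v 2 := by
    intro w hw
    by_contra hcon
    push_neg at hcon
    obtain ⟨hw0, hw2⟩ := hcon
    by_cases hw4 : w = v 4
    · exact hN14 (hw4 ▸ hw)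
    exact noC3 hac h12 (hAdjc w hw0 hw2 hw4) hw
  have hNa3 : ∀ w, T.Adj (v 3) w → w = v 4 ∨ w = v 2 := by
    intro w hw
    by_contra hcon
    push_neg at hcon
    obtain ⟨hw4, hw2⟩ := hcon
    by_cases hw0 : w = v 0
    · exact hN03 (hw0 ▸ hw.symm)
    exact noC3 hac h23.symm (hAdjc w hw0 hw2 hw4) hw
  -- edge classification
  have hedge : ∀ e ∈ T.edgeSet, e = s(v 0, v 1) ∨ e = s(v 3, v 4) ∨
      ∃ w, w ≠ v 0 ∧ w ≠ v 2 ∧ w ≠ v 4 ∧ e = s(v 2, w) := by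
    intro e he
    induction e with
    | _ x y =>
      rw [mem_edgeSet] at he
      by_cases hx2 : x = v 2
      · subst hx2
        exact Or.inr (Or.inr ⟨y, (hNcmem y he).1, (hNcmem y he).2.1, (hNcmem y he).2.2, rfl⟩)
      by_cases hy2 : y = v 2
      · subst hy2
        refine Or.inr (Or.inr ⟨x, (hNcmem x he.symm).1, (hNcmem x he.symm).2.1,
          (hNcmem x he.symm).2.2, Sym2.eq_swap⟩)
      by_cases hx0 : x = v 0
      · subst hx0; rw [hNa0 y he]; exact Or.inl rfl
      by_cases hx4 : x = v 4
      · subst hx4; rw [hNa4 y he]; exact Or.inr (Or.inl Sym2.eq_swap)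
      by_cases hx1 : x = v 1
      · subst hx1
        rcases hNa1 y he with h | h
        · rw [h]; exact Or.inl Sym2.eq_swap
        · exact absurd h hy2
      by_cases hx3 : x = v 3
      · subst hx3
        rcases hNa3 y he with h | h
        · rw [h]; exact Or.inr (Or.inl rfl)
        · exact absurd h hy2
      · exact absurd (hNleaf x hx0 hx1 hx2 hx3 hx4 y he) hy2
  -- a leaf exists
  obtain ⟨u0, hu00, hu01, hu02, hu03, hu04⟩ :
      ∃ u : V, u ≠ v 0 ∧ u ≠ v 1 ∧ u ≠ v 2 ∧ u ≠ v 3 ∧ u ≠ v 4 := by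
    have hnonempty : (T.neighborSet (v 2) \ {v 1, v 3}).Nonempty := by
      rw [Set.nonempty_iff_ne_empty]
      intro h
      rw [Set.diff_eq_empty] at h
      have hle := Set.ncard_le_ncard h (Set.toFinite _)
      have h2 : ({v 1, v 3} : Set V).ncard ≤ 2 :=
        (Set.ncard_insert_le _ _).trans (by simp)
      rw [hdeg] at hle
      omega
    obtain ⟨u, hu⟩ := hnonempty
    simp only [Set.mem_diff, Set.mem_insert_iff, Set.mem_singleton_iff, not_or,
      mem_neighborSet] at hu
    obtain ⟨hadj, hu1, hu3⟩ := hu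
    exact ⟨u, (hNcmem u hadj).1, hu1, (hNcmem u hadj).2.1, hu3, (hNcmem u hadj).2.2⟩
  -- cardinalities
  haveI : Fintype T.edgeSet := Set.Finite.fintype (Set.toFinite _)
  have hcardE : Fintype.card T.edgeSet + 1 = Fintype.card V := by
    rw [← Set.toFinset_card]
    exact hT.card_edgeFinset
  have hcardSum : Nat.card (V ⊕ T.edgeSet) = 2 * Fintype.card V - 1 := by
    rw [Nat.card_eq_fintype_card, Fintype.card_sum]
    omega
  set M := middleGraph T with hM
  set S : Set (V ⊕ T.edgeSet) := {Sum.inl (v 1), Sum.inl (v 2), Sum.inl (v 3),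
    Sum.inr ⟨s(v 1, v 2), h12⟩, Sum.inr ⟨s(v 2, v 3), h23⟩} with hSdef
  -- Sym2 distinctness
  have hs1223 : (⟨s(v 1, v 2), h12⟩ : T.edgeSet) ≠ ⟨s(v 2, v 3), h23⟩ := by
    intro h
    rw [Subtype.ext_iff, Sym2.eq_iff] at h
    rcases h with ⟨h, _⟩ | ⟨h, _⟩
    · exact hne 1 2 (by decide) h
    · exact hne 1 3 (by decide) h
  have hS5 : S.ncard = 5 := by
    rw [hSdef]
    rw [Set.ncard_insert_of_notMem
      (by simp [hne 1 2 (by decide), hne 1 3 (by decide)]) (Set.toFinite _)]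
    rw [Set.ncard_insert_of_notMem (by simp [hne 2 3 (by decide)]) (Set.toFinite _)]
    rw [Set.ncard_insert_of_notMem (by simp) (Set.toFinite _)]
    rw [Set.ncard_insert_of_notMem (by simp [hs1223]) (Set.toFinite _)]
    rw [Set.ncard_singleton]
  have hScard : Sᶜ.ncard = 2 * Fintype.card V - 6 := by
    have h := Set.ncard_add_ncard_compl S
    rw [hS5, hcardSum] at h
    omega
  have d01 := hne 0 1 (by decide)
  have d02 := hne 0 2 (by decide)
  have d03 := hne 0 3 (by decide)
  have d04 := hne 0 4 (by decide)
  have d12 := hne 1 2 (by decide)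
  have d13 := hne 1 3 (by decide)
  have d14 := hne 1 4 (by decide)
  have d23 := hne 2 3 (by decide)
  have d24 := hne 2 4 (by decide)
  have d34 := hne 3 4 (by decide)
  have d10 := d01.symm; have d20 := d02.symm; have d30 := d03.symm; have d40 := d04.symm
  have d21 := d12.symm; have d31 := d13.symm; have d41 := d14.symm
  have d32 := d23.symm; have d42 := d24.symm; have d43 := d34.symm
  -- total domination of Sᶜ
  have htd : IsTotalDomSet M Sᶜ := by
    rintro (a | e)
    · by_cases ha0 : a = v 0
      · subst ha0
        refine ⟨Sum.inr ⟨s(v 0, v 1), h01⟩, ?_, ?_⟩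
        · simp [hSdef, Sym2.eq_iff, Subtype.ext_iff, d01, d02, d03, d12, d13]
        · exact Sym2.mem_mk_left _ _
      by_cases ha1 : a = v 1
      · subst ha1
        refine ⟨Sum.inr ⟨s(v 0, v 1), h01⟩, ?_, ?_⟩
        · simp [hSdef, Sym2.eq_iff, Subtype.ext_iff, d01, d02, d03, d12, d13]
        · exact Sym2.mem_mk_right _ _
      by_cases ha2 : a = v 2
      · subst ha2
        refine ⟨Sum.inr ⟨s(v 2, u0), (hAdjc u0 hu00 hu02 hu04)⟩, ?_, ?_⟩
        · simp [hSdef, Sym2.eq_iff, Subtype.ext_iff, d21, d23, hu01, hu02, hu03]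
        · exact Sym2.mem_mk_left _ _
      by_cases ha3 : a = v 3
      · subst ha3
        refine ⟨Sum.inr ⟨s(v 3, v 4), h34⟩, ?_, ?_⟩
        · simp [hSdef, Sym2.eq_iff, Subtype.ext_iff, d31, d32, d34, d41, d42, d43, d12, d23]
        · exact Sym2.mem_mk_left _ _
      by_cases ha4 : a = v 4
      · subst ha4
        refine ⟨Sum.inr ⟨s(v 3, v 4), h34⟩, ?_, ?_⟩
        · simp [hSdef, Sym2.eq_iff, Subtype.ext_iff, d31, d32, d34, d41, d42, d43, d12, d23]
        · exact Sym2.mem_mk_right _ _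
      · refine ⟨Sum.inr ⟨s(v 2, a), (hAdjc a ha0 ha2 ha4)⟩, ?_, ?_⟩
        · simp [hSdef, Sym2.eq_iff, Subtype.ext_iff, d21, d23, ha1, ha2, ha3]
        · exact Sym2.mem_mk_right _ _
    · rcases hedge e.1 e.2 with he | he | ⟨w, hw0, hw2, hw4, he⟩
      · refine ⟨Sum.inl (v 0), ?_, ?_⟩
        · simp [hSdef, d01, d02, d03]
        · show v 0 ∈ (e : Sym2 V)
          rw [he]; exact Sym2.mem_mk_left _ _
      · refine ⟨Sum.inl (v 4), ?_, ?_⟩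
        · simp [hSdef, d41, d42, d43]
        · show v 4 ∈ (e : Sym2 V)
          rw [he]; exact Sym2.mem_mk_right _ _
      · by_cases hw1 : w = v 1
        · subst hw1
          refine ⟨Sum.inr ⟨s(v 0, v 1), h01⟩, ?_, ?_, ?_⟩
          · simp [hSdef, Sym2.eq_iff, Subtype.ext_iff, d01, d02, d03, d12, d13]
          · intro hcon
            rw [Subtype.ext_iff, he, Sym2.eq_iff] at hcon
            rcases hcon with ⟨h, _⟩ | ⟨h, _⟩
            · exact d20 h
            · exact d21 h
          · exact ⟨v 1, by rw [he]; exact Sym2.mem_mk_right _ _, Sym2.mem_mk_right _ _⟩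
        by_cases hw3 : w = v 3
        · subst hw3
          refine ⟨Sum.inr ⟨s(v 3, v 4), h34⟩, ?_, ?_, ?_⟩
          · simp [hSdef, Sym2.eq_iff, Subtype.ext_iff, d31, d32, d34, d41, d42, d43, d12, d23]
          · intro hcon
            rw [Subtype.ext_iff, he, Sym2.eq_iff] at hcon
            rcases hcon with ⟨h, _⟩ | ⟨h, _⟩
            · exact d23 h
            · exact d24 h
          · exact ⟨v 3, by rw [he]; exact Sym2.mem_mk_right _ _, Sym2.mem_mk_left _ _⟩
        · refine ⟨Sum.inl w, ?_, ?_⟩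
          · simp [hSdef, hw1, hw2, hw3]
          · show w ∈ (e : Sym2 V)
            rw [he]; exact Sym2.mem_mk_right _ _
  -- connectivity of the induced graph on S
  have hconn : (M.induce S).Connected := by
    have m1 : Sum.inl (v 1) ∈ S := by simp [hSdef]
    have m2 : Sum.inl (v 2) ∈ S := by simp [hSdef]
    have m3 : Sum.inl (v 3) ∈ S := by simp [hSdef]
    have m12 : Sum.inr (⟨s(v 1, v 2), h12⟩ : T.edgeSet) ∈ S := by simp [hSdef]
    have m23 : Sum.inr (⟨s(v 2, v 3), h23⟩ : T.edgeSet) ∈ S := by simp [hSdef]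
    have r1 : (M.induce S).Reachable ⟨Sum.inr ⟨s(v 1, v 2), h12⟩, m12⟩ ⟨Sum.inl (v 2), m2⟩ :=
      Adj.reachable (by exact Sym2.mem_mk_right _ _)
    have r2 : (M.induce S).Reachable ⟨Sum.inl (v 1), m1⟩ ⟨Sum.inr ⟨s(v 1, v 2), h12⟩, m12⟩ :=
      Adj.reachable (by exact Sym2.mem_mk_left _ _)
    have r3 : (M.induce S).Reachable ⟨Sum.inr ⟨s(v 2, v 3), h23⟩, m23⟩ ⟨Sum.inl (v 2), m2⟩ :=
      Adj.reachable (by exact Sym2.mem_mk_left _ _)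
    have r4 : (M.induce S).Reachable ⟨Sum.inl (v 3), m3⟩ ⟨Sum.inr ⟨s(v 2, v 3), h23⟩, m23⟩ :=
      Adj.reachable (by exact Sym2.mem_mk_right _ _)
    have hhub : ∀ z (hz : z ∈ S), (M.induce S).Reachable ⟨z, hz⟩ ⟨Sum.inl (v 2), m2⟩ := by
      intro z hz
      have hz' := hz
      rw [hSdef] at hz'
      simp only [Set.mem_insert_iff, Set.mem_singleton_iff] at hz'
      rcases hz' with rfl | rfl | rfl | rfl | rfl
      · exact r2.trans r1
      · exact Reachable.refl _
      · exact r4.trans r3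
      · exact r1
      · exact r3
    rw [connected_iff]
    exact ⟨fun x y => (hhub x.1 x.2).trans (hhub y.1 y.2).symm, ⟨⟨Sum.inl (v 2), m2⟩⟩⟩
  have hTOC : IsTOCDomSet M Sᶜ := ⟨htd, by rw [compl_compl]; exact hconn⟩
  -- forced edge-vertices
  have hforce : ∀ (D : Set (V ⊕ T.edgeSet)), IsTotalDomSet M D →
      ∀ (a y : V) (hay : T.Adj a y), (∀ w, T.Adj a w → w = y) →
      Sum.inr ⟨s(a, y), hay⟩ ∈ D := by
    intro D hD a y hay huniq
    obtain ⟨u, huD, hadj⟩ := hD (Sum.inl a)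
    match u with
    | Sum.inl b => exact (hadj : False).elim
    | Sum.inr f =>
      have h1 : a ∈ (f : Sym2 V) := hadj
      have h2 : f = (⟨s(a, y), hay⟩ : T.edgeSet) :=
        Subtype.ext (pendant_edge_unique T a y huniq f f.2 h1)
      rwa [h2] at huD
  have hpend : ∀ a : V, a ≠ v 1 → a ≠ v 2 → a ≠ v 3 →
      ∃ y, ∃ hy : T.Adj a y, ∀ w, T.Adj a w → w = y := by
    intro a h1 h2 h3
    by_cases h0 : a = v 0
    · subst h0; exact ⟨v 1, h01, hNa0⟩
    by_cases h4 : a = v 4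
    · subst h4; exact ⟨v 3, h34.symm, hNa4⟩
    · exact ⟨v 2, (hAdjc a h0 h2 h4).symm, hNleaf a h0 h1 h2 h3 h4⟩
  -- lower bound
  have hlow : ∀ k ∈ {k | ∃ D, IsTOCDomSet M D ∧ D.ncard = k},
      2 * Fintype.card V - 6 ≤ k := by
    rintro k ⟨D, ⟨hDt, hDc⟩, rfl⟩
    by_cases hall : ∀ a : V, a ≠ v 1 → a ≠ v 2 → a ≠ v 3 → Sum.inl a ∈ D
    · have hsub : Sᶜ ⊆ D := by
        rintro (a | e) hx
        · rw [hSdef] at hx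
          simp only [Set.mem_compl_iff, Set.mem_insert_iff, Set.mem_singleton_iff, not_or,
            Sum.inl.injEq, reduceCtorEq, not_false_eq_true, and_true] at hx
          exact hall a hx.1 hx.2.1 hx.2.2
        · rw [hSdef] at hx
          simp only [Set.mem_compl_iff, Set.mem_insert_iff, Set.mem_singleton_iff, not_or,
            Sum.inr.injEq, reduceCtorEq, not_false_eq_true, true_and] at hx
          rcases hedge e.1 e.2 with he | he | ⟨w, hw0, hw2, hw4, he⟩
          · have hf := hforce D hDt (v 0) (v 1) h01 hNa0
            have heq : e = (⟨s(v 0, v 1), h01⟩ : T.edgeSet) := Subtype.ext he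
            rwa [heq]
          · have hf := hforce D hDt (v 4) (v 3) h34.symm hNa4
            have heq : e = (⟨s(v 4, v 3), h34.symm⟩ : T.edgeSet) :=
              Subtype.ext (he.trans Sym2.eq_swap)
            rwa [heq]
          · by_cases hw1 : w = v 1
            · exfalso
              apply hx.1
              apply Subtype.ext
              rw [he, hw1]
              exact Sym2.eq_swap
            by_cases hw3 : w = v 3
            · exfalso
              apply hx.2
              apply Subtype.ext
              rw [he, hw3]
            · have hf := hforce D hDt w (v 2) (hAdjc w hw0 hw2 hw4).symm
                (hNleaf w hw0 hw1 hw2 hw3 hw4)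
              have heq : e = (⟨s(w, v 2), (hAdjc w hw0 hw2 hw4).symm⟩ : T.edgeSet) :=
                Subtype.ext (he.trans Sym2.eq_swap)
              rwa [heq]
      calc 2 * Fintype.card V - 6 = Sᶜ.ncard := hScard.symm
        _ ≤ D.ncard := Set.ncard_le_ncard hsub (Set.toFinite _)
    · push_neg at hall
      obtain ⟨a, h1, h2, h3, haD⟩ := hall
      obtain ⟨y, hay, huniq⟩ := hpend a h1 h2 h3
      have hfD := hforce D hDt a y hay huniq
      have hmemDc : Sum.inl a ∈ Dᶜ := haD
      have hiso : ∀ z ∈ Dᶜ, ¬ M.Adj (Sum.inl a) z := by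
        rintro (b | f) hz hadj
        · exact (hadj : False)
        · have hf1 : a ∈ (f : Sym2 V) := hadj
          have hfe : f = (⟨s(a, y), hay⟩ : T.edgeSet) :=
            Subtype.ext (pendant_edge_unique T a y huniq f f.2 hf1)
          exact hz (by rw [hfe]; exact hfD)
      have hDc1 : Dᶜ = {Sum.inl a} := isolated_connected hDc hmemDc hiso
      have hD1 : D = ({Sum.inl a} : Set (V ⊕ T.edgeSet))ᶜ := by
        rw [← hDc1, compl_compl]
      have hcc := Set.ncard_add_ncard_compl ({Sum.inl a} : Set (V ⊕ T.edgeSet))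
      rw [Set.ncard_singleton, hcardSum] at hcc
      rw [hD1]
      omega
  have hmem : 2 * Fintype.card V - 6 ∈ {k | ∃ D, IsTOCDomSet M D ∧ D.ncard = k} :=
    ⟨Sᶜ, hTOC, hScard⟩
  unfold tocDomNum
  exact le_antisymm (Nat.sInf_le hmem) (le_csInf ⟨_, hmem⟩ hlow)
end

section
/- For any spider graph S_{1,n,n} on 2n+1 vertices with n ≥ 3, γ_tc(M(S_{1,n,n})) = 2n + 2. -/
open SimpleGraph

section SpiderAux

open Sum Set

variable (n : ℕ)

/-- vertex type of the middle graph of the spider -/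
abbrev MV (n : ℕ) := (Option (Fin n ⊕ Fin n)) ⊕ ((spiderGraph n).edgeSet)

lemma eE_mem (i : Fin n) : s(none, some (Sum.inl i)) ∈ (spiderGraph n).edgeSet := by
  rw [SimpleGraph.mem_edgeSet]; trivial

lemma fE_mem (i : Fin n) :
    s(some (Sum.inl i), some (Sum.inr i)) ∈ (spiderGraph n).edgeSet := by
  rw [SimpleGraph.mem_edgeSet]; show i = i; rfl

def eV (i : Fin n) : (spiderGraph n).edgeSet := ⟨s(none, some (Sum.inl i)), eE_mem n i⟩
def fV (i : Fin n) : (spiderGraph n).edgeSet :=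
  ⟨s(some (Sum.inl i), some (Sum.inr i)), fE_mem n i⟩

lemma edge_char (g : (spiderGraph n).edgeSet) : (∃ i, g = eV n i) ∨ (∃ i, g = fV n i) := by
  obtain ⟨g, hg⟩ := g
  induction g using Sym2.ind with
  | _ a b =>
    rw [SimpleGraph.mem_edgeSet] at hg
    rcases a with _ | i | i <;> rcases b with _ | j | j
    · exact hg.elim
    · exact Or.inl ⟨j, rfl⟩
    · exact hg.elim
    · exact Or.inl ⟨i, Subtype.ext (Sym2.eq_swap)⟩
    · exact hg.elim
    · exact Or.inr ⟨i, Subtype.ext (by cases hg; rfl)⟩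
    · exact hg.elim
    · exact Or.inr ⟨j, Subtype.ext (by cases hg; exact Sym2.eq_swap)⟩
    · exact hg.elim

lemma mem_eV {v : Option (Fin n ⊕ Fin n)} {i : Fin n} :
    v ∈ (eV n i : Sym2 (Option (Fin n ⊕ Fin n))) ↔ v = none ∨ v = some (Sum.inl i) :=
  Sym2.mem_iff

lemma mem_fV {v : Option (Fin n ⊕ Fin n)} {i : Fin n} :
    v ∈ (fV n i : Sym2 (Option (Fin n ⊕ Fin n))) ↔
      v = some (Sum.inl i) ∨ v = some (Sum.inr i) :=
  Sym2.mem_iff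

lemma eV_inj : Function.Injective (eV n) := by
  intro i j h
  simpa [eV, Sym2.eq_iff] using h

lemma fV_inj : Function.Injective (fV n) := by
  intro i j h
  have := congrArg Subtype.val h
  simp only [fV, Sym2.eq_iff, Option.some.injEq, Sum.inl.injEq, Sum.inr.injEq,
    reduceCtorEq] at this
  tauto

lemma eV_ne_fV (i j : Fin n) : eV n i ≠ fV n j := by
  intro h
  have := congrArg Subtype.val h
  simp [eV, fV, Sym2.eq_iff] at this

lemma ncard_range {α β : Type*} [Fintype α] (f : α → β) (hf : Function.Injective f) :
    (Set.range f).ncard = Fintype.card α := by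
  rw [← Nat.card_coe_set_eq, Nat.card_range_of_injective hf, Nat.card_eq_fintype_card]

/-- upper-bound set: leaves, f-edges, plus `e j0` and `mid j0`. -/
def upMap (j0 : Fin n) : (Fin n ⊕ Fin n ⊕ Fin 2) → MV n
  | Sum.inl i => Sum.inl (some (Sum.inr i))
  | Sum.inr (Sum.inl i) => Sum.inr (fV n i)
  | Sum.inr (Sum.inr b) =>
      if b = 0 then Sum.inr (eV n j0) else Sum.inl (some (Sum.inl j0))

lemma upMap_inj (j0 : Fin n) : Function.Injective (upMap n j0) := by
  rintro (i | i | b) (j | j | c) h <;>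
    simp only [upMap] at h <;>
    first
    | (split_ifs at h <;>
        simp_all [eV_ne_fV, (eV_ne_fV n j0 _).symm, fV_inj n |>.eq_iff])
    | simp_all [fV_inj n |>.eq_iff]
  · omega

/-- 2n-element set: leaves and f-edges. -/
def baseMap : (Fin n ⊕ Fin n) → MV n
  | Sum.inl i => Sum.inl (some (Sum.inr i))
  | Sum.inr i => Sum.inr (fV n i)

lemma baseMap_inj : Function.Injective (baseMap n) := by
  rintro (i | i) (j | j) h <;> simp_all [baseMap, fV_inj n |>.eq_iff]

/-- 2n+2-element set avoiding all leaves: all edges, hub, one mid. -/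
def avoidMap (j0 : Fin n) : (Fin n ⊕ Fin n ⊕ Fin 2) → MV n
  | Sum.inl i => Sum.inr (eV n i)
  | Sum.inr (Sum.inl i) => Sum.inr (fV n i)
  | Sum.inr (Sum.inr b) => if b = 0 then Sum.inl none else Sum.inl (some (Sum.inl j0))

lemma avoidMap_inj (j0 : Fin n) : Function.Injective (avoidMap n j0) := by
  rintro (i | i | b) (j | j | c) h <;>
    simp only [avoidMap] at h <;>
    first
    | (split_ifs at h <;> simp_all)
    | simp_all [fV_inj n |>.eq_iff, eV_inj n |>.eq_iff, eV_ne_fV, (eV_ne_fV n _ _).symm]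
  · omega

end SpiderAux


lemma exists_adj_of_reachable {V : Type*} {G : SimpleGraph V} {u v : V}
    (h : G.Reachable u v) (hne : u ≠ v) : ∃ w, G.Adj u w := by
  obtain ⟨p⟩ := h
  cases p with
  | nil => exact absurd rfl hne
  | cons h _ => exact ⟨_, h⟩

theorem stmt17 (n : ℕ) (hn : 3 ≤ n) :
    tocDomNum (middleGraph (spiderGraph n)) = 2 * n + 2 := by
  have hn0 : 0 < n := by omega
  set j0 : Fin n := ⟨0, hn0⟩ with hj0
  set M := middleGraph (spiderGraph n) with hM
  set D : Set (MV n) := Set.range (upMap n j0) with hD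
  -- membership facts for D
  have hleafD : ∀ i : Fin n, (Sum.inl (some (Sum.inr i)) : MV n) ∈ D := fun i => ⟨Sum.inl i, rfl⟩
  have hfD : ∀ i : Fin n, (Sum.inr (fV n i) : MV n) ∈ D := fun i => ⟨Sum.inr (Sum.inl i), rfl⟩
  have heD : (Sum.inr (eV n j0) : MV n) ∈ D := ⟨Sum.inr (Sum.inr 0), by simp [upMap]⟩
  have hmD : (Sum.inl (some (Sum.inl j0)) : MV n) ∈ D :=
    ⟨Sum.inr (Sum.inr 1), by norm_num [upMap]⟩
  have hhubD : (Sum.inl none : MV n) ∉ D := by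
    rintro ⟨(a | a | b), hx⟩ <;> simp only [upMap] at hx
    · exact absurd hx (by simp)
    · exact absurd hx (by simp)
    · split_ifs at hx <;> simp_all
  have hmidD : ∀ i : Fin n, i ≠ j0 → (Sum.inl (some (Sum.inl i)) : MV n) ∉ D := by
    intro i hi
    rintro ⟨(a | a | b), hx⟩ <;> simp only [upMap] at hx
    · exact absurd hx (by simp)
    · exact absurd hx (by simp)
    · split_ifs at hx <;> simp_all
  have heiD : ∀ i : Fin n, i ≠ j0 → (Sum.inr (eV n i) : MV n) ∉ D := by
    intro i hi
    rintro ⟨(a | a | b), hx⟩ <;> simp only [upMap] at hx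
    · exact absurd hx (by simp)
    · exact (eV_ne_fV n i a).symm (Sum.inr.inj hx)
    · by_cases hb : b = 0
      · rw [if_pos hb] at hx
        exact hi (eV_inj n (Sum.inr.inj hx)).symm
      · rw [if_neg hb] at hx
        exact absurd hx (by simp)
  -- D is total dominating
  have hDdom : IsTotalDomSet M D := by
    rintro ((_ | i | i) | g)
    · exact ⟨Sum.inr (eV n j0), heD, (mem_eV n).2 (Or.inl rfl)⟩
    · exact ⟨Sum.inr (fV n i), hfD i, (mem_fV n).2 (Or.inl rfl)⟩
    · exact ⟨Sum.inr (fV n i), hfD i, (mem_fV n).2 (Or.inr rfl)⟩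
    · rcases edge_char n g with ⟨i, rfl⟩ | ⟨i, rfl⟩
      · exact ⟨Sum.inr (fV n i), hfD i,
          ⟨eV_ne_fV n i i, some (Sum.inl i), (mem_eV n).2 (Or.inr rfl), (mem_fV n).2 (Or.inl rfl)⟩⟩
      · exact ⟨Sum.inl (some (Sum.inr i)), hleafD i, (mem_fV n).2 (Or.inr rfl)⟩
  -- complement of D is connected
  have hhubC : (Sum.inl none : MV n) ∈ Dᶜ := hhubD
  have hreach : ∀ u : ↥(Dᶜ), (M.induce Dᶜ).Reachable u ⟨Sum.inl none, hhubC⟩ := by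
    rintro ⟨(_ | i | i) | g, hx⟩
    · rfl
    · have hi : i ≠ j0 := fun h => hx (h ▸ hmD)
      have heC : (Sum.inr (eV n i) : MV n) ∈ Dᶜ := heiD i hi
      have h1 : (M.induce Dᶜ).Adj ⟨Sum.inl (some (Sum.inl i)), hx⟩ ⟨Sum.inr (eV n i), heC⟩ :=
        (mem_eV n).2 (Or.inr rfl)
      have h2 : (M.induce Dᶜ).Adj ⟨Sum.inr (eV n i), heC⟩ ⟨Sum.inl none, hhubC⟩ :=
        (mem_eV n).2 (Or.inl rfl)
      exact h1.reachable.trans h2.reachable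
    · exact absurd (hleafD i) hx
    · rcases edge_char n g with ⟨i, rfl⟩ | ⟨i, rfl⟩
      · exact (SimpleGraph.Adj.reachable ((mem_eV n).2 (Or.inl rfl) :
          (M.induce Dᶜ).Adj ⟨Sum.inr (eV n i), hx⟩ ⟨Sum.inl none, hhubC⟩))
      · exact absurd (hfD i) hx
  haveI : Nonempty ↥(Dᶜ) := ⟨⟨Sum.inl none, hhubC⟩⟩
  have hDconn : (M.induce Dᶜ).Connected :=
    ⟨fun u v => (hreach u).trans (hreach v).symm⟩
  have hDncard : D.ncard = 2 * n + 2 := by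
    rw [hD, ncard_range _ (upMap_inj n j0)]
    simp only [Fintype.card_sum, Fintype.card_fin]
    omega
  have hmem : (2 * n + 2) ∈ {k | ∃ D : Set (MV n), IsTOCDomSet M D ∧ D.ncard = k} :=
    ⟨D, ⟨hDdom, hDconn⟩, hDncard⟩
  refine le_antisymm (Nat.sInf_le hmem) (le_csInf ⟨_, hmem⟩ ?_)
  rintro k ⟨E, ⟨hEdom, hEconn⟩, rfl⟩
  by_contra hlt
  push_neg at hlt
  have hle : E.ncard ≤ 2 * n + 1 := by omega
  -- Step A : all f-edges in E
  have hA : ∀ j : Fin n, (Sum.inr (fV n j) : MV n) ∈ E := by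
    intro j
    obtain ⟨u, hu, hadj⟩ := hEdom (Sum.inl (some (Sum.inr j)))
    rcases u with v | g
    · exact hadj.elim
    · have hmem : (some (Sum.inr j) : Option (Fin n ⊕ Fin n)) ∈ (g : Sym2 _) := hadj
      rcases edge_char n g with ⟨i, rfl⟩ | ⟨i, rfl⟩
      · rcases (mem_eV n).1 hmem with h | h <;> simp_all
      · rcases (mem_fV n).1 hmem with h | h
        · simp_all
        · obtain rfl : i = j := by simpa using h.symm
          exact hu
  -- helper for Step B and the final step: an element of Eᶜ has no Sum.inl-adjacency issue
  -- Step B : all leaves in E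
  have hB : ∀ j : Fin n, (Sum.inl (some (Sum.inr j)) : MV n) ∈ E := by
    intro j
    by_contra hleaf
    -- find another vertex outside E
    have hex : ∃ x ∈ Eᶜ, x ≠ (Sum.inl (some (Sum.inr j)) : MV n) := by
      by_contra hno
      push_neg at hno
      have hsub : Set.range (avoidMap n j0) ⊆ E := by
        rintro x ⟨(a | a | b), rfl⟩
        · by_contra hxE
          exact absurd (hno _ hxE) (by simp [avoidMap])
        · by_contra hxE
          exact absurd (hno _ hxE) (by simp [avoidMap])
        · by_contra hxE
          refine absurd (hno _ hxE) ?_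
          simp only [avoidMap]
          split_ifs <;> simp
      have := Set.ncard_le_ncard hsub (Set.toFinite E)
      rw [ncard_range _ (avoidMap_inj n j0)] at this
      simp only [Fintype.card_sum, Fintype.card_fin] at this
      omega
    obtain ⟨x, hxC, hxne⟩ := hex
    have hleafC : (Sum.inl (some (Sum.inr j)) : MV n) ∈ Eᶜ := hleaf
    have hne : (⟨_, hleafC⟩ : ↥(Eᶜ)) ≠ ⟨x, hxC⟩ := by
      intro h
      exact hxne (congrArg Subtype.val h).symm
    obtain ⟨w, hadj⟩ := exists_adj_of_reachable (hEconn.preconnected _ _) hne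
    obtain ⟨(y | g), hyC⟩ := w
    · exact hadj
    · have hmem : (some (Sum.inr j) : Option (Fin n ⊕ Fin n)) ∈ (g : Sym2 _) := hadj
      rcases edge_char n g with ⟨i, rfl⟩ | ⟨i, rfl⟩
      · rcases (mem_eV n).1 hmem with h | h <;> simp_all
      · rcases (mem_fV n).1 hmem with h | h
        · simp_all
        · have hij : i = j := by simpa using h.symm
          exact hyC (hij ▸ hA j)
  -- Step C : some e-edge in E
  obtain ⟨kk, hkk⟩ : ∃ i : Fin n, (Sum.inr (eV n i) : MV n) ∈ E := by
    obtain ⟨u, hu, hadj⟩ := hEdom (Sum.inl none)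
    rcases u with v | g
    · exact hadj.elim
    · have hmem : (none : Option (Fin n ⊕ Fin n)) ∈ (g : Sym2 _) := hadj
      rcases edge_char n g with ⟨i, rfl⟩ | ⟨i, rfl⟩
      · exact ⟨i, hu⟩
      · rcases (mem_fV n).1 hmem with h | h <;> simp_all
  -- Step D : E is exactly base ∪ {e kk}
  have hbase_sub : insert (Sum.inr (eV n kk) : MV n) (Set.range (baseMap n)) ⊆ E := by
    rintro x (rfl | ⟨(a | a), rfl⟩)
    · exact hkk
    · exact hB a
    · exact hA a
  have hekk_notmem : (Sum.inr (eV n kk) : MV n) ∉ Set.range (baseMap n) := by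
    rintro ⟨(a | a), h⟩ <;> simp only [baseMap] at h
    · exact absurd h (by simp)
    · exact eV_ne_fV n kk a (Sum.inr.inj h).symm
  have hins_card : (insert (Sum.inr (eV n kk) : MV n) (Set.range (baseMap n))).ncard
      = 2 * n + 1 := by
    rw [Set.ncard_insert_of_notMem hekk_notmem (Set.toFinite _),
      ncard_range _ (baseMap_inj n)]
    simp only [Fintype.card_sum, Fintype.card_fin]
    omega
  have hEeq : insert (Sum.inr (eV n kk) : MV n) (Set.range (baseMap n)) = E :=
    Set.eq_of_subset_of_ncard_le hbase_sub (by omega) (Set.toFinite E)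
  -- Step E : mid kk and hub are outside E, mid kk is isolated in the complement
  have hmidE : (Sum.inl (some (Sum.inl kk)) : MV n) ∈ Eᶜ := by
    rw [← hEeq]
    rintro (h | ⟨(a | a), h⟩) <;> simp [baseMap] at h
  have hhubE : (Sum.inl none : MV n) ∈ Eᶜ := by
    rw [← hEeq]
    rintro (h | ⟨(a | a), h⟩) <;> simp [baseMap] at h
  have hne : (⟨_, hmidE⟩ : ↥(Eᶜ)) ≠ ⟨_, hhubE⟩ := by simp [Subtype.ext_iff]
  obtain ⟨w, hadj⟩ := exists_adj_of_reachable (hEconn.preconnected _ _) hne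
  obtain ⟨(y | g), hyC⟩ := w
  · exact hadj
  · have hmem : (some (Sum.inl kk) : Option (Fin n ⊕ Fin n)) ∈ (g : Sym2 _) := hadj
    rcases edge_char n g with ⟨i, rfl⟩ | ⟨i, rfl⟩
    · rcases (mem_eV n).1 hmem with h | h
      · simp_all
      · have hik : i = kk := by simpa using h.symm
        exact hyC (hik ▸ hkk)
    · rcases (mem_fV n).1 hmem with h | h
      · have hik : i = kk := by simpa using h.symm
        exact hyC (hik ▸ hA kk)
      · simp at h
end
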